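/- The function G attains its minimum over S (i.e., there exists x̄ ∈ S with G(x̄) ≤ G(x) for all x ∈ S) under either of the following assumptions: (i) there exists α > 0 such that N(I,J,α) is nonempty and precompact (has compact closure); (ii) X is a reflexive Banach space, S and Θ_j for every j ∈ J are weakly closed, and there exists α > 0 such that N(I,J,α) is nonempty and bounded. -/

import Mathlib

open Set Pointwise Filter Topology Bornology Function

variable {X : Type*} [NormedAddCommGroup X] [NormedSpace ℝ X]

/-- The Minkowski gauge of `F`: `ρ_F(x) = inf {t ≥ 0 : x ∈ t • F}`. -/
noncomputable def rhoF (F : Set X) (x : X) : ℝ :=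
  sInf {t : ℝ | 0 ≤ t ∧ x ∈ t • F}

/-- The maximal time function `C_F(x; Q) = sup {ρ_F(q - x) : q ∈ Q}`. -/
noncomputable def maxTime (F Q : Set X) (x : X) : ℝ :=
  sSup ((fun q => rhoF F (q - x)) '' Q)

/-- The minimal time function `T_F(x; Θ) = inf {ρ_F(q - x) : q ∈ Θ}`. -/
noncomputable def minTime (F Θ : Set X) (x : X) : ℝ :=
  sInf ((fun q => rhoF F (q - x)) '' Θ)

/-- `G(x) = max {C_F(x; Ω_i), T_F(x; Θ_j) : i ∈ I, j ∈ J}`. -/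
noncomputable def GFun {ι κ : Type*} (F : Set X) (I : Finset ι) (J : Finset κ)
    (Ω : ι → Set X) (Θ : κ → Set X) (x : X) : ℝ :=
  sSup ((fun i => maxTime F (Ω i) x) '' ↑I ∪ (fun j => minTime F (Θ j) x) '' ↑J)

/-- `H(x) = Σ_{i∈I} C_F(x; Ω_i) + Σ_{j∈J} T_F(x; Θ_j)`. -/
noncomputable def HFun {ι κ : Type*} (F : Set X) (I : Finset ι) (J : Finset κ)
    (Ω : ι → Set X) (Θ : κ → Set X) (x : X) : ℝ :=
  ∑ i ∈ I, maxTime F (Ω i) x + ∑ j ∈ J, minTime F (Θ j) x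

/-- `N(I,J,α) = S ∩ [⋂_{i∈I} ⋂_{ω∈Ω_i} (ω - α•F)] ∩ [⋂_{j∈J} (Θ_j - α•F)]`. -/
def NSet {ι κ : Type*} (F : Set X) (I : Finset ι) (J : Finset κ)
    (Ω : ι → Set X) (Θ : κ → Set X) (S : Set X) (α : ℝ) : Set X :=
  S ∩ (⋂ i ∈ I, ⋂ ω ∈ Ω i, (({ω} : Set X) - α • F)) ∩ ⋂ j ∈ J, (Θ j - α • F)

/-- A set is weakly closed if it is closed in the weak topology on `Y`. -/
def WeaklyClosed (Y : Type*) [NormedAddCommGroup Y] [NormedSpace ℝ Y] (A : Set Y) : Prop :=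
  IsClosed (toWeakSpace ℝ Y '' A)

/-- A normed space is reflexive if the canonical embedding into its double dual is surjective. -/
def IsReflexiveSpace (Y : Type*) [NormedAddCommGroup Y] [NormedSpace ℝ Y] : Prop :=
  Function.Surjective (NormedSpace.inclusionInDoubleDual ℝ Y)

/-! ### Auxiliary lemmas -/

theorem rhoF_eq_gauge {F : Set X} (h0 : (0:X) ∈ F) (x : X) : rhoF F x = gauge F x := by
  rcases eq_or_ne x 0 with rfl | hx
  · rw [gauge_zero, rhoF]
    have hmem : (0:ℝ) ∈ {t : ℝ | 0 ≤ t ∧ (0:X) ∈ t • F} := by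
      refine ⟨le_refl 0, ?_⟩
      rw [zero_smul_set ⟨0, h0⟩]; exact rfl
    exact le_antisymm (csInf_le ⟨0, fun t ht => ht.1⟩ hmem) (le_csInf ⟨0, hmem⟩ fun t ht => ht.1)
  · rw [rhoF, gauge]
    congr 1
    ext t
    simp only [mem_setOf_eq, and_congr_left_iff]
    intro htF
    refine ⟨fun h => h.lt_of_ne' fun h0t => ?_, le_of_lt⟩
    rw [h0t, zero_smul_set ⟨0, h0⟩] at htF
    exact hx htF

theorem myFnhds {F : Set X} (hF0 : (0 : X) ∈ interior F) : F ∈ 𝓝 (0:X) :=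
  mem_interior_iff_mem_nhds.mp hF0

theorem myabs {F : Set X} (hF0 : (0 : X) ∈ interior F) : Absorbent ℝ F :=
  absorbent_nhds_zero (myFnhds hF0)

theorem gauge_mem_smul_iff {F : Set X} (hFc : IsClosed F) (hFconv : Convex ℝ F)
    (hF0 : (0 : X) ∈ interior F) {c : ℝ} (hc : 0 < c) {y : X} :
    y ∈ c • F ↔ gauge F y ≤ c := by
  constructor
  · exact gauge_le_of_mem hc.le
  · intro h
    have h1 : gauge F (c⁻¹ • y) ≤ 1 := by
      rw [gauge_smul_of_nonneg (inv_nonneg.mpr hc.le), smul_eq_mul]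
      calc c⁻¹ * gauge F y ≤ c⁻¹ * c :=
            mul_le_mul_of_nonneg_left h (inv_nonneg.mpr hc.le)
        _ = 1 := inv_mul_cancel₀ hc.ne'
    have h2 := (gauge_le_one_iff_mem_closure hFconv (myFnhds hF0)).mp h1
    rw [hFc.closure_eq] at h2
    exact ⟨c⁻¹ • y, h2, by simp [smul_inv_smul₀ hc.ne']⟩

theorem gauge_mem_smul_of_lt {F : Set X} (hFconv : Convex ℝ F)
    (hF0 : (0 : X) ∈ interior F) {c : ℝ} {y : X} (hlt : gauge F y < c) : y ∈ c • F := by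
  have hc : 0 < c := (gauge_nonneg y).trans_lt hlt
  have h1 : gauge F (c⁻¹ • y) < 1 := by
    rw [gauge_smul_of_nonneg (inv_nonneg.mpr hc.le), smul_eq_mul]
    calc c⁻¹ * gauge F y < c⁻¹ * c := (mul_lt_mul_iff_right₀ (inv_pos.mpr hc)).mpr hlt
      _ = 1 := inv_mul_cancel₀ hc.ne'
  have h2 := gauge_lt_one_subset_self hFconv (interior_subset hF0) (myabs hF0) h1
  exact ⟨c⁻¹ • y, h2, by simp [smul_inv_smul₀ hc.ne']⟩

theorem gauge_tri {F : Set X} (hFconv : Convex ℝ F) (hF0 : (0 : X) ∈ interior F)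
    (a b : X) : gauge F a ≤ gauge F b + gauge F (a - b) := by
  have := gauge_add_le hFconv (myabs hF0) b (a - b)
  rwa [add_sub_cancel] at this

theorem gauge_le_norm_div {F : Set X} {r : ℝ} (hr : 0 < r) (hrF : Metric.ball (0:X) r ⊆ F)
    (y : X) : gauge F y ≤ ‖y‖ / r := by
  have := gauge_mono (absorbent_ball_zero hr) hrF y
  rwa [gauge_ball hr.le] at this

theorem maxTime_eq {F Q : Set X} (h0 : (0:X) ∈ F) (x : X) :
    maxTime F Q x = sSup ((fun q => gauge F (q - x)) '' Q) := by
  unfold maxTime; congr 1; ext v; simp [rhoF_eq_gauge h0]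

theorem minTime_eq {F Q : Set X} (h0 : (0:X) ∈ F) (x : X) :
    minTime F Q x = sInf ((fun q => gauge F (q - x)) '' Q) := by
  unfold minTime; congr 1; ext v; simp [rhoF_eq_gauge h0]

theorem bddAbove_gauge_image {F Q : Set X} {r : ℝ} (hr : 0 < r)
    (hrF : Metric.ball (0:X) r ⊆ F) (hQb : IsBounded Q) (x : X) :
    BddAbove ((fun q => gauge F (q - x)) '' Q) := by
  obtain ⟨M, hM⟩ := hQb.exists_norm_le
  refine ⟨(M + ‖x‖) / r, ?_⟩
  rintro v ⟨q, hq, rfl⟩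
  refine (gauge_le_norm_div hr hrF _).trans ?_
  have h1 : ‖q - x‖ ≤ M + ‖x‖ := (norm_sub_le q x).trans (by linarith [hM q hq])
  gcongr

theorem le_maxTime {F Q : Set X} (h0 : (0:X) ∈ F) {r : ℝ} (hr : 0 < r)
    (hrF : Metric.ball (0:X) r ⊆ F) (hQb : IsBounded Q) {x q : X} (hq : q ∈ Q) :
    gauge F (q - x) ≤ maxTime F Q x := by
  rw [maxTime_eq h0]
  exact le_csSup (bddAbove_gauge_image hr hrF hQb x) ⟨q, hq, rfl⟩

theorem maxTime_le {F Q : Set X} (h0 : (0:X) ∈ F) (hQ : Q.Nonempty) {x : X} {c : ℝ}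
    (h : ∀ q ∈ Q, gauge F (q - x) ≤ c) : maxTime F Q x ≤ c := by
  rw [maxTime_eq h0]
  exact csSup_le (hQ.image _) (by rintro v ⟨q, hq, rfl⟩; exact h q hq)

theorem minTime_le {F Q : Set X} (h0 : (0:X) ∈ F) {x θ : X} (hθ : θ ∈ Q) :
    minTime F Q x ≤ gauge F (θ - x) := by
  rw [minTime_eq h0]
  exact csInf_le ⟨0, by rintro v ⟨q, hq, rfl⟩; exact gauge_nonneg _⟩ ⟨θ, hθ, rfl⟩

theorem minTime_nonneg {F Q : Set X} (h0 : (0:X) ∈ F) (hQ : Q.Nonempty) (x : X) :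
    0 ≤ minTime F Q x := by
  rw [minTime_eq h0]
  exact le_csInf (hQ.image _) (by rintro v ⟨q, hq, rfl⟩; exact gauge_nonneg _)

theorem exists_lt_of_minTime_lt {F Q : Set X} (h0 : (0:X) ∈ F) (hQ : Q.Nonempty) {x : X} {c : ℝ}
    (h : minTime F Q x < c) : ∃ θ ∈ Q, gauge F (θ - x) < c := by
  rw [minTime_eq h0] at h
  obtain ⟨v, ⟨θ, hθ, rfl⟩, hv⟩ :=
    (csInf_lt_iff ⟨0, by rintro v ⟨q, hq, rfl⟩; exact gauge_nonneg _⟩ (hQ.image _)).mp h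
  exact ⟨θ, hθ, hv⟩

section GLemmas
variable {ι κ : Type*} {F : Set X} {I : Finset ι} {J : Finset κ} {Ω : ι → Set X} {Θ : κ → Set X}

theorem GSet_finite (x : X) :
    (((fun i => maxTime F (Ω i) x) '' ↑I ∪ (fun j => minTime F (Θ j) x) '' ↑J)).Finite :=
  (I.finite_toSet.image _).union (J.finite_toSet.image _)

theorem GSet_nonempty (hIJ : I.Nonempty ∨ J.Nonempty) (x : X) :
    (((fun i => maxTime F (Ω i) x) '' ↑I ∪ (fun j => minTime F (Θ j) x) '' ↑J)).Nonempty := by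
  rcases hIJ with ⟨i, hi⟩ | ⟨j, hj⟩
  · exact ⟨_, mem_union_left _ ⟨i, hi, rfl⟩⟩
  · exact ⟨_, mem_union_right _ ⟨j, hj, rfl⟩⟩

theorem le_GFun_max {x : X} {i : ι} (hi : i ∈ I) :
    maxTime F (Ω i) x ≤ GFun F I J Ω Θ x :=
  le_csSup (GSet_finite x).bddAbove (mem_union_left _ ⟨i, hi, rfl⟩)

theorem le_GFun_min {x : X} {j : κ} (hj : j ∈ J) :
    minTime F (Θ j) x ≤ GFun F I J Ω Θ x :=
  le_csSup (GSet_finite x).bddAbove (mem_union_right _ ⟨j, hj, rfl⟩)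

theorem GFun_le (hIJ : I.Nonempty ∨ J.Nonempty) {x : X} {c : ℝ}
    (hmax : ∀ i ∈ I, maxTime F (Ω i) x ≤ c) (hmin : ∀ j ∈ J, minTime F (Θ j) x ≤ c) :
    GFun F I J Ω Θ x ≤ c := by
  refine csSup_le (GSet_nonempty hIJ x) ?_
  rintro v (⟨i, hi, rfl⟩ | ⟨j, hj, rfl⟩)
  · exact hmax i hi
  · exact hmin j hj

theorem GFun_nonneg (h0 : (0:X) ∈ F) {r : ℝ} (hr : 0 < r) (hrF : Metric.ball (0:X) r ⊆ F)
    (hΩne : ∀ i ∈ I, (Ω i).Nonempty) (hΩb : ∀ i ∈ I, IsBounded (Ω i))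
    (hΘne : ∀ j ∈ J, (Θ j).Nonempty)
    (hIJ : I.Nonempty ∨ J.Nonempty) (x : X) : 0 ≤ GFun F I J Ω Θ x := by
  rcases hIJ with ⟨i, hi⟩ | ⟨j, hj⟩
  · refine le_trans ?_ (le_GFun_max hi)
    obtain ⟨q, hq⟩ := hΩne i hi
    exact (gauge_nonneg (q - x)).trans (le_maxTime h0 hr hrF (hΩb i hi) hq)
  · exact (minTime_nonneg h0 (hΘne j hj) x).trans (le_GFun_min hj)

theorem maxTime_le_add (h0 : (0:X) ∈ F) (hFconv : Convex ℝ F) (hF0 : (0 : X) ∈ interior F)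
    {r : ℝ} (hr : 0 < r) (hrF : Metric.ball (0:X) r ⊆ F) {Q : Set X}
    (hQ : Q.Nonempty) (hQb : IsBounded Q) (x y : X) :
    maxTime F Q x ≤ maxTime F Q y + gauge F (y - x) := by
  refine maxTime_le h0 hQ fun q hq => ?_
  have h1 := gauge_tri hFconv hF0 (q - x) (q - y)
  have h2 : q - x - (q - y) = y - x := by abel
  rw [h2] at h1
  exact h1.trans (add_le_add_left (le_maxTime h0 hr hrF hQb hq) _)

theorem minTime_le_add (h0 : (0:X) ∈ F) (hFconv : Convex ℝ F) (hF0 : (0 : X) ∈ interior F)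
    {Q : Set X} (hQ : Q.Nonempty) (x y : X) :
    minTime F Q x ≤ minTime F Q y + gauge F (y - x) := by
  have key : minTime F Q x - gauge F (y - x) ≤ minTime F Q y := by
    rw [minTime_eq h0 y]
    refine le_csInf (hQ.image _) ?_
    rintro v ⟨θ, hθ, rfl⟩
    have h1 := gauge_tri hFconv hF0 (θ - x) (θ - y)
    have h2 : θ - x - (θ - y) = y - x := by abel
    rw [h2] at h1
    have h3 := (minTime_le h0 hθ (x := x)).trans h1
    linarith
  linarith

theorem GFun_le_add (h0 : (0:X) ∈ F) (hFconv : Convex ℝ F) (hF0 : (0 : X) ∈ interior F)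
    {r : ℝ} (hr : 0 < r) (hrF : Metric.ball (0:X) r ⊆ F)
    (hΩne : ∀ i ∈ I, (Ω i).Nonempty) (hΩb : ∀ i ∈ I, IsBounded (Ω i))
    (hΘne : ∀ j ∈ J, (Θ j).Nonempty)
    (hIJ : I.Nonempty ∨ J.Nonempty) (x y : X) :
    GFun F I J Ω Θ x ≤ GFun F I J Ω Θ y + gauge F (y - x) := by
  refine GFun_le hIJ (fun i hi => ?_) (fun j hj => ?_)
  · exact (maxTime_le_add h0 hFconv hF0 hr hrF (hΩne i hi) (hΩb i hi) x y).trans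
      (add_le_add_left (le_GFun_max hi) _)
  · exact (minTime_le_add h0 hFconv hF0 (hΘne j hj) x y).trans
      (add_le_add_left (le_GFun_min hj) _)

theorem GFun_continuous (h0 : (0:X) ∈ F) (hFconv : Convex ℝ F) (hF0 : (0 : X) ∈ interior F)
    {r : ℝ} (hr : 0 < r) (hrF : Metric.ball (0:X) r ⊆ F)
    (hΩne : ∀ i ∈ I, (Ω i).Nonempty) (hΩb : ∀ i ∈ I, IsBounded (Ω i))
    (hΘne : ∀ j ∈ J, (Θ j).Nonempty)
    (hIJ : I.Nonempty ∨ J.Nonempty) :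
    Continuous (GFun F I J Ω Θ) := by
  have key : ∀ x y : X, GFun F I J Ω Θ x - GFun F I J Ω Θ y ≤ ‖x - y‖ / r := by
    intro x y
    have h1 := GFun_le_add h0 hFconv hF0 hr hrF hΩne hΩb hΘne hIJ x y
    have h2 : gauge F (y - x) ≤ ‖y - x‖ / r := gauge_le_norm_div hr hrF (y - x)
    have h3 : ‖y - x‖ = ‖x - y‖ := norm_sub_rev y x
    rw [h3] at h2
    linarith
  have hlip : LipschitzWith (1/r).toNNReal (GFun F I J Ω Θ) := by
    refine LipschitzWith.of_dist_le_mul fun x y => ?_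
    have hxy : 1 / r * dist x y = ‖x - y‖ / r := by rw [dist_eq_norm]; ring
    rw [Real.dist_eq, Real.coe_toNNReal _ (by positivity), hxy, abs_sub_le_iff]
    refine ⟨key x y, (key y x).trans_eq ?_⟩
    rw [norm_sub_rev]
  exact hlip.continuous

end GLemmas

theorem mem_singleton_sub_smul {F : Set X} {ω x : X} {c : ℝ} :
    x ∈ ({ω} : Set X) - c • F ↔ ω - x ∈ c • F := by
  rw [Set.mem_sub]
  constructor
  · rintro ⟨a, ha, b, hb, rfl⟩
    rw [mem_singleton_iff] at ha; subst ha
    simpa [sub_sub_cancel] using hb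
  · intro h
    exact ⟨ω, mem_singleton _, ω - x, h, sub_sub_cancel ω x⟩

theorem mem_set_sub_smul {Θ F : Set X} {x : X} {c : ℝ} :
    x ∈ Θ - c • F ↔ ∃ θ ∈ Θ, θ - x ∈ c • F := by
  rw [Set.mem_sub]
  constructor
  · rintro ⟨a, ha, b, hb, rfl⟩
    exact ⟨a, ha, by simpa [sub_sub_cancel] using hb⟩
  · rintro ⟨θ, hθ, h⟩
    exact ⟨θ, hθ, θ - x, h, sub_sub_cancel θ x⟩

theorem singleton_sub_smul_eq {F : Set X} (hFc : IsClosed F) (hFconv : Convex ℝ F)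
    (hF0 : (0 : X) ∈ interior F) {c : ℝ} (hc : 0 < c) (ω : X) :
    ({ω} : Set X) - c • F = {x : X | gauge F (ω - x) ≤ c} := by
  ext x
  rw [mem_singleton_sub_smul, gauge_mem_smul_iff hFc hFconv hF0 hc]
  rfl

section NLemmas
variable {ι κ : Type*} {F : Set X} {I : Finset ι} {J : Finset κ} {Ω : ι → Set X}
  {Θ : κ → Set X} {S : Set X} {α : ℝ}

theorem GFun_le_of_mem_NSet (hFc : IsClosed F) (hFconv : Convex ℝ F)
    (hF0 : (0 : X) ∈ interior F) (hα : 0 < α)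
    (hΩne : ∀ i ∈ I, (Ω i).Nonempty) (hIJ : I.Nonempty ∨ J.Nonempty)
    {x : X} (hx : x ∈ NSet F I J Ω Θ S α) :
    GFun F I J Ω Θ x ≤ α := by
  obtain ⟨⟨hxS, hxI⟩, hxJ⟩ := hx
  have h0 : (0:X) ∈ F := interior_subset hF0
  refine GFun_le hIJ (fun i hi => ?_) (fun j hj => ?_)
  · refine maxTime_le h0 (hΩne i hi) fun q hq => ?_
    have := mem_iInter₂.mp (mem_iInter₂.mp hxI i hi) q hq
    exact (gauge_mem_smul_iff hFc hFconv hF0 hα).mp (mem_singleton_sub_smul.mp this)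
  · have := mem_iInter₂.mp hxJ j hj
    obtain ⟨θ, hθ, hmem⟩ := mem_set_sub_smul.mp this
    exact (minTime_le h0 hθ).trans ((gauge_mem_smul_iff hFc hFconv hF0 hα).mp hmem)

theorem mem_NSet_of_GFun_lt (hFconv : Convex ℝ F) (hF0 : (0 : X) ∈ interior F)
    {r : ℝ} (hr : 0 < r) (hrF : Metric.ball (0:X) r ⊆ F)
    (hΩb : ∀ i ∈ I, IsBounded (Ω i)) (hΘne : ∀ j ∈ J, (Θ j).Nonempty)
    {x : X} (hxS : x ∈ S) (hx : GFun F I J Ω Θ x < α) :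
    x ∈ NSet F I J Ω Θ S α := by
  have h0 : (0:X) ∈ F := interior_subset hF0
  refine ⟨⟨hxS, ?_⟩, ?_⟩
  · refine mem_iInter₂.mpr fun i hi => mem_iInter₂.mpr fun q hq => ?_
    refine mem_singleton_sub_smul.mpr (gauge_mem_smul_of_lt hFconv hF0 ?_)
    exact lt_of_le_of_lt ((le_maxTime h0 hr hrF (hΩb i hi) hq).trans (le_GFun_max hi)) hx
  · refine mem_iInter₂.mpr fun j hj => ?_
    have hlt : minTime F (Θ j) x < α := lt_of_le_of_lt (le_GFun_min hj) hx
    obtain ⟨θ, hθ, hg⟩ := exists_lt_of_minTime_lt h0 (hΘne j hj) hlt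
    exact mem_set_sub_smul.mpr ⟨θ, hθ, gauge_mem_smul_of_lt hFconv hF0 hg⟩

theorem NSet_subset_S : NSet F I J Ω Θ S α ⊆ S := fun _ hx => hx.1.1

theorem conclusion_of_min_on_NSet (hFc : IsClosed F) (hFconv : Convex ℝ F)
    (hF0 : (0 : X) ∈ interior F) {r : ℝ} (hr : 0 < r) (hrF : Metric.ball (0:X) r ⊆ F)
    (hα : 0 < α) (hΩne : ∀ i ∈ I, (Ω i).Nonempty) (hΩb : ∀ i ∈ I, IsBounded (Ω i))
    (hΘne : ∀ j ∈ J, (Θ j).Nonempty) (hIJ : I.Nonempty ∨ J.Nonempty)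
    (hNne : (NSet F I J Ω Θ S α).Nonempty)
    (hmin : ∃ xbar ∈ S, ∀ y ∈ NSet F I J Ω Θ S α, GFun F I J Ω Θ xbar ≤ GFun F I J Ω Θ y) :
    ∃ xbar ∈ S, ∀ x ∈ S, GFun F I J Ω Θ xbar ≤ GFun F I J Ω Θ x := by
  obtain ⟨xbar, hxbarS, hxbar⟩ := hmin
  obtain ⟨x₀, hx₀⟩ := hNne
  refine ⟨xbar, hxbarS, fun x hxS => ?_⟩
  by_cases hlt : GFun F I J Ω Θ x < α
  · exact hxbar x (mem_NSet_of_GFun_lt hFconv hF0 hr hrF hΩb hΘne hxS hlt)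
  · calc GFun F I J Ω Θ xbar ≤ GFun F I J Ω Θ x₀ := hxbar x₀ hx₀
      _ ≤ α := GFun_le_of_mem_NSet hFc hFconv hF0 hα hΩne hIJ hx₀
      _ ≤ GFun F I J Ω Θ x := not_lt.mp hlt

end NLemmas

/-! ### Weak topology lemmas -/

theorem weaklyClosed_of_convex_of_isClosed {A : Set X} (hA : Convex ℝ A) (hAc : IsClosed A) :
    IsClosed (toWeakSpace ℝ X '' A) := by
  have h := hA.toWeakSpace_closure (𝕜 := ℝ)
  rw [hAc.closure_eq] at h
  rw [h]
  exact isClosed_closure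

theorem exists_min_of_isCompact_of_sublevels {β : Type*} [TopologicalSpace β] {K : Set β}
    (hK : IsCompact K) (hKc : IsClosed K) (hne : K.Nonempty) {f : β → ℝ}
    (hsub : ∀ c : ℝ, IsClosed {x | f x ≤ c}) : ∃ x ∈ K, ∀ y ∈ K, f x ≤ f y := by
  have hTne : (f '' K).Nonempty := hne.image f
  haveI : Nonempty (f '' K) := hTne.to_subtype
  set Z : f '' K → Set β := fun c => K ∩ {x | f x ≤ (c : ℝ)} with hZ
  have hdir : Directed (· ⊇ ·) Z := by
    rintro ⟨c, hc⟩ ⟨d, hd⟩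
    refine ⟨⟨min c d, ?_⟩, ?_, ?_⟩
    · rcases min_cases c d with ⟨h1, _⟩ | ⟨h1, _⟩ <;> rw [h1] <;> assumption
    · exact fun x hx => ⟨hx.1, hx.2.trans (min_le_left c d)⟩
    · exact fun x hx => ⟨hx.1, hx.2.trans (min_le_right c d)⟩
  have hZne : ∀ c, (Z c).Nonempty := by
    rintro ⟨c, x, hx, rfl⟩
    exact ⟨x, hx, le_refl (f x)⟩
  have hZcomp : ∀ c, IsCompact (Z c) := fun c => hK.inter_right (hsub c)
  have hZcl : ∀ c, IsClosed (Z c) := fun c => hKc.inter (hsub c)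
  obtain ⟨x, hx⟩ :=
    IsCompact.nonempty_iInter_of_directed_nonempty_isCompact_isClosed Z hdir hZne hZcomp hZcl
  rw [mem_iInter] at hx
  obtain ⟨y0, hy0⟩ := hne
  have hxK : x ∈ K := (hx ⟨f y0, y0, hy0, rfl⟩).1
  exact ⟨x, hxK, fun y hy => (hx ⟨f y, y, hy, rfl⟩).2⟩

theorem isCompact_weak_image (hrefl : Function.Surjective (NormedSpace.inclusionInDoubleDual ℝ X))
    {A : Set X} (hA : Convex ℝ A) (hAc : IsClosed A) (hAb : IsBounded A) :
    IsCompact (toWeakSpace ℝ X '' A) := by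
  obtain ⟨R, hR⟩ := hAb.exists_norm_le
  set ι := NormedSpace.inclusionInDoubleDualLi ℝ (E := X) with hι
  have hsurj : Function.Surjective ι := hrefl
  set ιe := LinearIsometryEquiv.ofSurjective ι hsurj with hιe
  have hιe_apply : ∀ (z : X) (g : StrongDual ℝ X), ιe z g = g z := fun z g => rfl
  set Φ : WeakDual ℝ (StrongDual ℝ X) → WeakSpace ℝ X :=
    fun f => toWeakSpace ℝ X (ιe.symm (WeakDual.toStrongDual f)) with hΦ
  have hΦcont : Continuous Φ := by
    refine WeakBilin.continuous_of_continuous_eval _ fun g => ?_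
    have hkey : ∀ f : WeakDual ℝ (StrongDual ℝ X),
        (topDualPairing ℝ X).flip (Φ f) g = f g := by
      intro f
      have h1 : ιe (ιe.symm (WeakDual.toStrongDual f)) = WeakDual.toStrongDual f :=
        ιe.apply_symm_apply _
      have h2 := congrArg (fun F => F g) h1
      exact (hιe_apply _ g).symm.trans h2
    simp only [hkey]
    exact WeakDual.eval_continuous g
  have hK₀ : IsCompact (WeakDual.toStrongDual ⁻¹' Metric.closedBall 0 R
      : Set (WeakDual ℝ (StrongDual ℝ X))) :=
    WeakDual.isCompact_closedBall (𝕜 := ℝ) (E := StrongDual ℝ X) 0 R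
  have hsub : toWeakSpace ℝ X '' A ⊆ Φ '' (WeakDual.toStrongDual ⁻¹' Metric.closedBall 0 R) := by
    rintro - ⟨a, ha, rfl⟩
    refine ⟨WeakDual.toStrongDual.symm (ιe a), ?_, ?_⟩
    · simp only [mem_preimage, LinearEquiv.apply_symm_apply, Metric.mem_closedBall,
        dist_zero_right]
      exact (dist_zero_right (ιe a)).trans_le ((ιe.norm_map a).trans_le (hR a ha))
    · simp only [hΦ, LinearEquiv.apply_symm_apply, LinearIsometryEquiv.symm_apply_apply]
  exact (hK₀.image hΦcont).of_isClosed_subset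
    (weaklyClosed_of_convex_of_isClosed hA hAc) hsub

theorem isClosed_weak_sub {Θ B : Set X} (hΘ' : IsClosed (toWeakSpace ℝ X '' Θ))
    (hB : IsCompact (toWeakSpace ℝ X '' B)) :
    IsClosed (toWeakSpace ℝ X '' (Θ - B)) := by
  rw [Set.image_sub]
  rw [sub_eq_add_neg, add_comm]
  exact hΘ'.add_left_of_isCompact hB.neg

theorem convex_gauge_sublevel {F : Set X} (hFconv : Convex ℝ F) (hF0 : (0 : X) ∈ interior F)
    (ω : X) (c : ℝ) : Convex ℝ {x : X | gauge F (ω - x) ≤ c} := by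
  intro x hx y hy a b ha hb hab
  simp only [mem_setOf_eq] at hx hy ⊢
  have hω : a • ω + b • ω = ω := by rw [← add_smul, hab, one_smul]
  have h1 : ω - (a • x + b • y) = (a • ω + b • ω) - (a • x + b • y) := by rw [hω]
  have hrw : ω - (a • x + b • y) = a • (ω - x) + b • (ω - y) := by
    rw [h1, smul_sub, smul_sub]; abel
  rw [hrw]
  calc gauge F (a • (ω - x) + b • (ω - y))
      ≤ gauge F (a • (ω - x)) + gauge F (b • (ω - y)) :=
        gauge_add_le hFconv (myabs hF0) _ _
    _ ≤ a * c + b * c := by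
        rw [gauge_smul_of_nonneg ha, gauge_smul_of_nonneg hb, smul_eq_mul, smul_eq_mul]
        exact add_le_add (mul_le_mul_of_nonneg_left hx ha) (mul_le_mul_of_nonneg_left hy hb)
    _ = c := by rw [← add_mul, hab, one_mul]

theorem isClosed_gauge_sublevel {F : Set X} (hFconv : Convex ℝ F) (hF0 : (0 : X) ∈ interior F)
    (ω : X) (c : ℝ) : IsClosed {x : X | gauge F (ω - x) ≤ c} := by
  have hg : Continuous fun x : X => gauge F (ω - x) :=
    (continuous_gauge hFconv (myFnhds hF0)).comp (continuous_const.sub continuous_id)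
  exact isClosed_le hg continuous_const

theorem weaklyClosed_gauge_sublevel {F : Set X} (hFconv : Convex ℝ F)
    (hF0 : (0 : X) ∈ interior F) (ω : X) (c : ℝ) :
    IsClosed (toWeakSpace ℝ X '' {x : X | gauge F (ω - x) ≤ c}) :=
  weaklyClosed_of_convex_of_isClosed (convex_gauge_sublevel hFconv hF0 ω c)
    (isClosed_gauge_sublevel hFconv hF0 ω c)

theorem minTime_sublevel {F Θ : Set X} (hFconv : Convex ℝ F) (hF0 : (0 : X) ∈ interior F)
    (hΘ : Θ.Nonempty) {c : ℝ} (hc : 0 ≤ c) :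
    {x : X | minTime F Θ x ≤ c} = ⋂ (ε : ℝ) (_ : 0 < ε), (Θ - (c + ε) • F) := by
  have h0 : (0:X) ∈ F := interior_subset hF0
  ext x
  simp only [mem_setOf_eq, mem_iInter]
  constructor
  · intro h ε hε
    obtain ⟨θ, hθ, hg⟩ := exists_lt_of_minTime_lt h0 hΘ (h.trans_lt (by linarith) :
      minTime F Θ x < c + ε)
    exact mem_set_sub_smul.mpr ⟨θ, hθ, gauge_mem_smul_of_lt hFconv hF0 hg⟩
  · intro h
    refine le_of_forall_pos_le_add fun ε hε => ?_
    obtain ⟨θ, hθ, hmem⟩ := mem_set_sub_smul.mp (h ε hε)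
    exact (minTime_le h0 hθ).trans (gauge_le_of_mem (by linarith) hmem)

theorem weaklyClosed_smul_compact
    (hrefl : Function.Surjective (NormedSpace.inclusionInDoubleDual ℝ X))
    {F : Set X} (hFc : IsClosed F) (hFb : IsBounded F) (hFconv : Convex ℝ F)
    {c : ℝ} (hc : 0 < c) : IsCompact (toWeakSpace ℝ X '' (c • F)) :=
  isCompact_weak_image hrefl (hFconv.smul c) (hFc.smul_of_ne_zero hc.ne') (hFb.smul₀ c)

section WeakG
variable {ι κ : Type*} {F : Set X} {I : Finset ι} {J : Finset κ} {Ω : ι → Set X}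
  {Θ : κ → Set X} {S : Set X} {α : ℝ}

theorem GFun_sublevel (h0 : (0:X) ∈ F) {r : ℝ} (hr : 0 < r) (hrF : Metric.ball (0:X) r ⊆ F)
    (hΩne : ∀ i ∈ I, (Ω i).Nonempty) (hΩb : ∀ i ∈ I, IsBounded (Ω i))
    (hIJ : I.Nonempty ∨ J.Nonempty) (c : ℝ) :
    {x : X | GFun F I J Ω Θ x ≤ c} =
      (⋂ i ∈ I, ⋂ ω ∈ Ω i, {x : X | gauge F (ω - x) ≤ c}) ∩
        ⋂ j ∈ J, {x : X | minTime F (Θ j) x ≤ c} := by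
  ext x
  simp only [mem_setOf_eq, mem_inter_iff, mem_iInter]
  constructor
  · intro h
    exact ⟨fun i hi ω hω => (le_maxTime h0 hr hrF (hΩb i hi) hω).trans
        ((le_GFun_max hi).trans h),
      fun j hj => (le_GFun_min hj).trans h⟩
  · rintro ⟨h1, h2⟩
    exact GFun_le hIJ (fun i hi => maxTime_le h0 (hΩne i hi) (fun q hq => h1 i hi q hq)) h2

theorem weaklyClosed_GFun_sublevel
    (hrefl : Function.Surjective (NormedSpace.inclusionInDoubleDual ℝ X))
    (hFc : IsClosed F) (hFb : IsBounded F) (hFconv : Convex ℝ F)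
    (hF0 : (0 : X) ∈ interior F) {r : ℝ} (hr : 0 < r) (hrF : Metric.ball (0:X) r ⊆ F)
    (hΩne : ∀ i ∈ I, (Ω i).Nonempty) (hΩb : ∀ i ∈ I, IsBounded (Ω i))
    (hΘne : ∀ j ∈ J, (Θ j).Nonempty)
    (hΘw : ∀ j ∈ J, IsClosed (toWeakSpace ℝ X '' Θ j))
    (hIJ : I.Nonempty ∨ J.Nonempty) (c : ℝ) :
    IsClosed (toWeakSpace ℝ X '' {x : X | GFun F I J Ω Θ x ≤ c}) := by
  have h0 : (0:X) ∈ F := interior_subset hF0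
  rcases lt_or_ge c 0 with hc | hc
  · have hempty : {x : X | GFun F I J Ω Θ x ≤ c} = ∅ :=
      eq_empty_of_forall_notMem fun x hx =>
        absurd (hx.trans_lt hc) (GFun_nonneg h0 hr hrF hΩne hΩb hΘne hIJ x).not_gt
    rw [hempty, image_empty]
    exact isClosed_empty
  · rw [GFun_sublevel h0 hr hrF hΩne hΩb hIJ c,
      Set.image_inter (toWeakSpace ℝ X).injective]
    refine IsClosed.inter ?_ ?_
    · rw [Set.image_iInter₂ (toWeakSpace ℝ X).bijective]
      refine isClosed_iInter fun i => isClosed_iInter fun hi => ?_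
      rw [Set.image_iInter₂ (toWeakSpace ℝ X).bijective]
      exact isClosed_iInter fun ω => isClosed_iInter fun hω =>
        weaklyClosed_gauge_sublevel hFconv hF0 ω c
    · rw [Set.image_iInter₂ (toWeakSpace ℝ X).bijective]
      refine isClosed_iInter fun j => isClosed_iInter fun hj => ?_
      rw [minTime_sublevel hFconv hF0 (hΘne j hj) hc,
        Set.image_iInter₂ (toWeakSpace ℝ X).bijective]
      refine isClosed_iInter fun ε => isClosed_iInter fun hε => ?_
      exact isClosed_weak_sub (hΘw j hj)
        (weaklyClosed_smul_compact hrefl hFc hFb hFconv (by linarith))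

theorem weaklyClosed_NSet
    (hrefl : Function.Surjective (NormedSpace.inclusionInDoubleDual ℝ X))
    (hFc : IsClosed F) (hFb : IsBounded F) (hFconv : Convex ℝ F)
    (hF0 : (0 : X) ∈ interior F) (hα : 0 < α)
    (hSw : IsClosed (toWeakSpace ℝ X '' S))
    (hΘw : ∀ j ∈ J, IsClosed (toWeakSpace ℝ X '' Θ j)) :
    IsClosed (toWeakSpace ℝ X '' NSet F I J Ω Θ S α) := by
  unfold NSet
  rw [Set.image_inter (toWeakSpace ℝ X).injective,
    Set.image_inter (toWeakSpace ℝ X).injective]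
  refine IsClosed.inter (IsClosed.inter hSw ?_) ?_
  · rw [Set.image_iInter₂ (toWeakSpace ℝ X).bijective]
    refine isClosed_iInter fun i => isClosed_iInter fun hi => ?_
    rw [Set.image_iInter₂ (toWeakSpace ℝ X).bijective]
    refine isClosed_iInter fun ω => isClosed_iInter fun hω => ?_
    rw [singleton_sub_smul_eq hFc hFconv hF0 hα ω]
    exact weaklyClosed_gauge_sublevel hFconv hF0 ω α
  · rw [Set.image_iInter₂ (toWeakSpace ℝ X).bijective]
    refine isClosed_iInter fun j => isClosed_iInter fun hj => ?_
    exact isClosed_weak_sub (hΘw j hj)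
      (weaklyClosed_smul_compact hrefl hFc hFb hFconv hα)

end WeakG

set_option maxHeartbeats 1000000 in
/-- Proposition 2.3. -/
theorem stmt2
    {ι κ : Type*} (F : Set X) (I : Finset ι) (J : Finset κ)
    (Ω : ι → Set X) (Θ : κ → Set X) (S : Set X)
    (hFc : IsClosed F) (hFb : IsBounded F) (hFconv : Convex ℝ F)
    (hF0 : (0 : X) ∈ interior F)
    (hΩne : ∀ i ∈ I, (Ω i).Nonempty) (hΩc : ∀ i ∈ I, IsClosed (Ω i))
    (hΩb : ∀ i ∈ I, IsBounded (Ω i))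
    (hΘne : ∀ j ∈ J, (Θ j).Nonempty) (hΘc : ∀ j ∈ J, IsClosed (Θ j))
    (hSne : S.Nonempty) (hSc : IsClosed S)
    (hIJ : I.Nonempty ∨ J.Nonempty)
    (hyp :
      (∃ α > (0 : ℝ), (NSet F I J Ω Θ S α).Nonempty ∧
        IsCompact (closure (NSet F I J Ω Θ S α))) ∨
      (CompleteSpace X ∧ IsReflexiveSpace X ∧ WeaklyClosed X S ∧
        (∀ j ∈ J, WeaklyClosed X (Θ j)) ∧
        ∃ α > (0 : ℝ), (NSet F I J Ω Θ S α).Nonempty ∧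
          IsBounded (NSet F I J Ω Θ S α))) :
    ∃ xbar ∈ S, ∀ x ∈ S, GFun F I J Ω Θ xbar ≤ GFun F I J Ω Θ x := by
  have h0 : (0:X) ∈ F := interior_subset hF0
  obtain ⟨r, hr, hrF⟩ : ∃ r > 0, Metric.ball (0:X) r ⊆ F := by
    obtain ⟨ε, hε, h⟩ := Metric.mem_nhds_iff.mp (myFnhds hF0)
    exact ⟨ε, hε, h⟩
  rcases hyp with ⟨α, hα, hNne, hNcomp⟩ | ⟨hcomp, hrefl, hSw, hΘw, α, hα, hNne, hNb⟩
  · -- Case (i): precompact N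
    have hGcont : Continuous (GFun F I J Ω Θ) :=
      GFun_continuous h0 hFconv hF0 hr hrF hΩne hΩb hΘne hIJ
    have hKsub : closure (NSet F I J Ω Θ S α) ⊆ S := closure_minimal NSet_subset_S hSc
    obtain ⟨xbar, hxbarK, hxbarmin⟩ :=
      hNcomp.exists_isMinOn hNne.closure hGcont.continuousOn
    exact conclusion_of_min_on_NSet hFc hFconv hF0 hr hrF hα hΩne hΩb hΘne hIJ hNne
      ⟨xbar, hKsub hxbarK, fun y hy => hxbarmin (subset_closure hy)⟩
  · -- Case (ii): reflexive space
    have hNw : IsClosed (toWeakSpace ℝ X '' NSet F I J Ω Θ S α) :=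
      weaklyClosed_NSet hrefl hFc hFb hFconv hF0 hα hSw hΘw
    obtain ⟨R, hRsub⟩ := hNb.subset_closedBall (0:X)
    have hNcomp : IsCompact (toWeakSpace ℝ X '' NSet F I J Ω Θ S α) := by
      refine IsCompact.of_isClosed_subset ?_ hNw (Set.image_mono hRsub)
      exact isCompact_weak_image hrefl (convex_closedBall (0:X) R)
        Metric.isClosed_closedBall Metric.isBounded_closedBall
    set f : WeakSpace ℝ X → ℝ := fun x' => GFun F I J Ω Θ ((toWeakSpace ℝ X).symm x') with hf
    have himg : ∀ c : ℝ, toWeakSpace ℝ X '' {x : X | GFun F I J Ω Θ x ≤ c} = {x' | f x' ≤ c} := by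
      intro c
      ext x'
      constructor
      · rintro ⟨x, hx, rfl⟩
        simpa [hf, LinearEquiv.symm_apply_apply] using hx
      · intro hx'
        exact ⟨(toWeakSpace ℝ X).symm x', hx', (toWeakSpace ℝ X).apply_symm_apply x'⟩
    have hsub : ∀ c : ℝ, IsClosed {x' : WeakSpace ℝ X | f x' ≤ c} := by
      intro c
      rw [← himg c]
      exact weaklyClosed_GFun_sublevel hrefl hFc hFb hFconv hF0 hr hrF hΩne hΩb hΘne hΘw hIJ c
    obtain ⟨x'bar, hx'K, hx'min⟩ :=
      exists_min_of_isCompact_of_sublevels hNcomp hNw (hNne.image _) hsub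
    obtain ⟨xbar, hxbarN, rfl⟩ := hx'K
    refine conclusion_of_min_on_NSet hFc hFconv hF0 hr hrF hα hΩne hΩb hΘne hIJ hNne
      ⟨xbar, NSet_subset_S hxbarN, fun y hy => ?_⟩
    have h1 := hx'min (toWeakSpace ℝ X y) ⟨y, hy, rfl⟩
    simpa [hf, LinearEquiv.symm_apply_apply] using h1
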